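/- Let m, n be positive integers and let r_1,…,r_m and c_1,…,c_n be nonnegative integers. If there exists a binary image F contained in {1,…,m} × {1,…,n} whose row sums are r_1,…,r_m and whose column sums are c_1,…,c_n, then for every k with 1 ≤ k ≤ m one has Σ_{i=1}^{k} b_i ≥ Σ_{i=1}^{k} r_i, where b_i = #{j ∈ {1,…,n} : c_j ≥ i}. (Here the row sums r_1,…,r_m are not assumed to be in non-increasing order.) -/

import Mathlib

/-- The row sum `r i` of a binary image `F`: the number of points of `F` in row `i`. -/
def rowSum (F : Finset (ℤ × ℤ)) (i : ℤ) : ℕ := (F.filter fun p => p.1 = i).card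

/-- The column sum `c j` of a binary image `F`: the number of points of `F` in column `j`. -/
def colSum (F : Finset (ℤ × ℤ)) (j : ℤ) : ℕ := (F.filter fun p => p.2 = j).card

/-- The length of the horizontal boundary of `F`: the number of pairs
`((i,j),(i',j'))` with `j = j'`, `|i - i'| = 1`, `(i,j) ∈ F` and `(i',j') ∉ F`. -/
noncomputable def horizBoundaryLen (F : Finset (ℤ × ℤ)) : ℕ :=
  Set.ncard {q : (ℤ × ℤ) × (ℤ × ℤ) |
    q.1.2 = q.2.2 ∧ |q.1.1 - q.2.1| = 1 ∧ q.1 ∈ F ∧ q.2 ∉ F}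

/-- Consequence of Ryser's theorem: if nonnegative integers `r_1, …, r_m` and
`c_1, …, c_n` are the row and column sums of some binary image in the
`m × n` grid, then `Σ_{i=1}^k b_i ≥ Σ_{i=1}^k r_i` for all `1 ≤ k ≤ m`,
where `b_i = #{j : c_j ≥ i}`. -/
theorem ryser_consequence (m n : ℕ) (hm : 0 < m) (hn : 0 < n)
    (r c : ℤ → ℕ)
    (hex : ∃ F : Finset (ℤ × ℤ),
      (∀ p ∈ F, p.1 ∈ Finset.Icc (1 : ℤ) (m : ℤ) ∧ p.2 ∈ Finset.Icc (1 : ℤ) (n : ℤ)) ∧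
      (∀ i ∈ Finset.Icc (1 : ℤ) (m : ℤ), rowSum F i = r i) ∧
      (∀ j ∈ Finset.Icc (1 : ℤ) (n : ℤ), colSum F j = c j))
    (k : ℤ) (hk1 : 1 ≤ k) (hkm : k ≤ (m : ℤ)) :
    ∑ i ∈ Finset.Icc (1 : ℤ) k, r i ≤
      ∑ i ∈ Finset.Icc (1 : ℤ) k,
        ((Finset.Icc (1 : ℤ) (n : ℤ)).filter fun j => i ≤ (c j : ℤ)).card := by
  obtain ⟨F, hF, hr, hc⟩ := hex
  set G := F.filter (fun p => p.1 ∈ Finset.Icc (1 : ℤ) k) with hG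
  have hsub : Finset.Icc (1 : ℤ) k ⊆ Finset.Icc 1 (m : ℤ) :=
    Finset.Icc_subset_Icc le_rfl hkm
  -- LHS = card G, grouped by rows
  have h1 : ∑ i ∈ Finset.Icc (1 : ℤ) k, r i = G.card := by
    have step := Finset.card_eq_sum_card_fiberwise
      (s := G) (t := Finset.Icc (1 : ℤ) k) (f := fun p => p.1)
      (fun p hp => (Finset.mem_filter.mp hp).2)
    rw [step]
    refine Finset.sum_congr rfl fun i hi => ?_
    rw [← hr i (hsub hi), rowSum]
    congr 1
    ext p
    simp only [hG, Finset.filter_filter, Finset.mem_filter]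
    constructor
    · rintro ⟨hp, hi'⟩; exact ⟨hp, hi' ▸ hi, hi'⟩
    · rintro ⟨hp, _, hi'⟩; exact ⟨hp, hi'⟩
  -- card G = sum over columns of fiber cards
  have h2 : G.card = ∑ j ∈ Finset.Icc (1 : ℤ) (n : ℤ),
      (G.filter fun p => p.2 = j).card := by
    exact Finset.card_eq_sum_card_fiberwise
      (s := G) (f := fun p => p.2) (t := Finset.Icc (1 : ℤ) (n : ℤ))
      (fun p hp => (hF p (Finset.mem_filter.mp hp).1).2)
  -- RHS swapped
  have h3 : ∑ i ∈ Finset.Icc (1 : ℤ) k,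
      ((Finset.Icc (1 : ℤ) (n : ℤ)).filter fun j => i ≤ (c j : ℤ)).card
      = ∑ j ∈ Finset.Icc (1 : ℤ) (n : ℤ),
        ((Finset.Icc (1 : ℤ) k).filter fun i => i ≤ (c j : ℤ)).card := by
    simp only [Finset.card_filter]
    rw [Finset.sum_comm]
  rw [h1, h2, h3]
  refine Finset.sum_le_sum fun j hj => ?_
  -- per-column bound
  have hcard : ((Finset.Icc (1 : ℤ) k).filter fun i => i ≤ (c j : ℤ)).card
      = (min k (c j : ℤ)).toNat := by
    have : ((Finset.Icc (1 : ℤ) k).filter fun i => i ≤ (c j : ℤ))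
        = Finset.Icc (1 : ℤ) (min k (c j : ℤ)) := by
      ext x
      simp only [Finset.mem_filter, Finset.mem_Icc, le_min_iff]
      tauto
    rw [this, Int.card_Icc]
    congr 1
    omega
  rw [hcard]
  have hb1 : (G.filter fun p => p.2 = j).card ≤ c j := by
    rw [← hc j hj, colSum]
    apply Finset.card_le_card
    intro p hp
    simp only [hG, Finset.filter_filter, Finset.mem_filter] at hp ⊢
    tauto
  have hb2 : (G.filter fun p => p.2 = j).card ≤ k.toNat := by
    have : (Finset.Icc (1 : ℤ) k).card = k.toNat := by
      rw [Int.card_Icc]; congr 1; omega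
    rw [← this]
    apply Finset.card_le_card_of_injOn (fun p => p.1)
    · intro p hp
      simp only [hG, Finset.filter_filter, Finset.mem_coe, Finset.mem_filter] at hp ⊢
      tauto
    · intro p hp q hq h
      simp only [hG, Finset.filter_filter, Finset.coe_filter, Finset.mem_filter,
        Set.mem_setOf_eq, Finset.mem_Icc] at hp hq
      have : p.2 = q.2 := by omega
      exact Prod.ext h this
  omega
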